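/- Let f(n) denote the minimum, over all 3-colorings γ : F₂ⁿ → {1,2,3}, of the ratio #{(x,y) ∈ F₂ⁿ × F₂ⁿ : x ≠ 0, y ≠ 0, x ≠ y, and γ(x) = γ(y) = γ(x+y)} / ((2ⁿ−1)·(2ⁿ−2)). Then limsup_{n→∞} f(n) ≤ 1/16. -/

import Mathlib

open Filter

lemma schur_count_bound (n : ℕ) (hn : 2 ≤ n) :
    ∃ γ : (Fin n → ZMod 2) → Fin 3,
      Nat.card {p : (Fin n → ZMod 2) × (Fin n → ZMod 2) //
          p.1 ≠ 0 ∧ p.2 ≠ 0 ∧ p.1 ≠ p.2 ∧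
            γ p.1 = γ p.2 ∧ γ p.2 = γ (p.1 + p.2)} ≤ (2 ^ (n - 2) - 1) ^ 2 := by
  have h0 : (0 : ℕ) < n := by omega
  have h1 : (1 : ℕ) < n := by omega
  set i0 : Fin n := ⟨0, h0⟩
  set i1 : Fin n := ⟨1, h1⟩
  have hne : i0 ≠ i1 := by simp [i0, i1, Fin.ext_iff]
  classical
  refine ⟨fun x => if x i0 = 1 then 0 else if x i1 = 1 then 1 else 2, ?_⟩
  set γ : (Fin n → ZMod 2) → Fin 3 :=
    fun x => if x i0 = 1 then 0 else if x i1 = 1 then 1 else 2 with hγ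
  -- monochromatic implies both coordinates vanish
  have key : ∀ x y : Fin n → ZMod 2, γ x = γ y → γ y = γ (x + y) →
      x i0 = 0 ∧ x i1 = 0 ∧ y i0 = 0 ∧ y i1 = 0 := by
    intro x y hxy hyz
    have hz : ∀ z : ZMod 2, z = 0 ∨ z = 1 := by decide
    have hadd0 : (x + y) i0 = x i0 + y i0 := rfl
    have hadd1 : (x + y) i1 = x i1 + y i1 := rfl
    rcases hz (x i0) with ha | ha <;> rcases hz (x i1) with hb | hb <;>
      rcases hz (y i0) with hc | hc <;> rcases hz (y i1) with hd | hd <;>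
      simp_all [γ]
  -- injection into pairs of nonzero vectors in Fin (n-2) → ZMod 2
  set res : (Fin n → ZMod 2) → (Fin (n - 2) → ZMod 2) :=
    fun x j => x ⟨j.1 + 2, by omega⟩ with hres
  have hresinj : ∀ x : Fin n → ZMod 2, x i0 = 0 → x i1 = 0 →
      ∀ y : Fin n → ZMod 2, y i0 = 0 → y i1 = 0 → res x = res y → x = y := by
    intro x hx0 hx1 y hy0 hy1 h
    funext i
    rcases i with ⟨iv, hiv⟩
    match iv, hiv with
    | 0, hiv => exact hx0.trans hy0.symm
    | 1, hiv => exact hx1.trans hy1.symm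
    | (k+2), hiv =>
      have := congrFun h ⟨k, by omega⟩
      simpa [res] using this
  have hresne : ∀ x : Fin n → ZMod 2, x ≠ 0 → x i0 = 0 → x i1 = 0 → res x ≠ 0 := by
    intro x hx hx0 hx1 h
    apply hx
    have h0' : (0 : Fin n → ZMod 2) i0 = 0 := rfl
    exact hresinj x hx0 hx1 0 rfl rfl (h.trans rfl)
  have : Nat.card {p : (Fin n → ZMod 2) × (Fin n → ZMod 2) //
          p.1 ≠ 0 ∧ p.2 ≠ 0 ∧ p.1 ≠ p.2 ∧
            γ p.1 = γ p.2 ∧ γ p.2 = γ (p.1 + p.2)} ≤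
      Nat.card ({v : Fin (n-2) → ZMod 2 // v ≠ 0} × {v : Fin (n-2) → ZMod 2 // v ≠ 0}) := by
    apply Nat.card_le_card_of_injective
      (f := fun p => (⟨res p.1.1, hresne _ p.2.1 (key _ _ p.2.2.2.2.1 p.2.2.2.2.2).1
          (key _ _ p.2.2.2.2.1 p.2.2.2.2.2).2.1⟩,
        ⟨res p.1.2, hresne _ p.2.2.1 (key _ _ p.2.2.2.2.1 p.2.2.2.2.2).2.2.1
          (key _ _ p.2.2.2.2.1 p.2.2.2.2.2).2.2.2⟩))
    intro p q hpq
    obtain ⟨hp1, hq1⟩ : res p.1.1 = res q.1.1 ∧ res p.1.2 = res q.1.2 := by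
      constructor
      · exact congrArg (fun z => (z.1 : Fin (n-2) → ZMod 2)) hpq
      · exact congrArg (fun z => (z.2 : Fin (n-2) → ZMod 2)) hpq
    have kp := key _ _ p.2.2.2.2.1 p.2.2.2.2.2
    have kq := key _ _ q.2.2.2.2.1 q.2.2.2.2.2
    have e1 : p.1.1 = q.1.1 := hresinj _ kp.1 kp.2.1 _ kq.1 kq.2.1 hp1
    have e2 : p.1.2 = q.1.2 := hresinj _ kp.2.2.1 kp.2.2.2 _ kq.2.2.1 kq.2.2.2 hq1
    ext <;> simp [e1, e2]
  refine this.trans ?_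
  rw [Nat.card_prod]
  have : Nat.card {v : Fin (n-2) → ZMod 2 // v ≠ 0} = 2 ^ (n-2) - 1 := by
    rw [Nat.card_eq_fintype_card]
    simp [Fintype.card_subtype_compl, Fintype.card_fun]
  rw [this, sq]


/-- The minimum fraction of monochromatic Schur triples over all 3-colorings of `F₂ⁿ`
has limsup at most `1/16`. -/
theorem radoMultiplicity_schur_threeColors_F2_upper :
    limsup
      (fun n : ℕ =>
        ⨅ γ : (Fin n → ZMod 2) → Fin 3,
          (Nat.card {p : (Fin n → ZMod 2) × (Fin n → ZMod 2) //
              p.1 ≠ 0 ∧ p.2 ≠ 0 ∧ p.1 ≠ p.2 ∧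
                γ p.1 = γ p.2 ∧ γ p.2 = γ (p.1 + p.2)} : ℝ)
            / (((2 : ℝ) ^ n - 1) * ((2 : ℝ) ^ n - 2)))
      atTop ≤ 1 / 16 := by
  set u : ℕ → ℝ := fun n =>
    ⨅ γ : (Fin n → ZMod 2) → Fin 3,
      (Nat.card {p : (Fin n → ZMod 2) × (Fin n → ZMod 2) //
          p.1 ≠ 0 ∧ p.2 ≠ 0 ∧ p.1 ≠ p.2 ∧
            γ p.1 = γ p.2 ∧ γ p.2 = γ (p.1 + p.2)} : ℝ)
        / (((2 : ℝ) ^ n - 1) * ((2 : ℝ) ^ n - 2)) with hu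
  have hD : ∀ n : ℕ, 0 ≤ ((2 : ℝ) ^ n - 1) * ((2 : ℝ) ^ n - 2) := by
    intro n
    rcases Nat.eq_zero_or_pos n with h | h
    · subst h; norm_num
    · have : (2 : ℝ) ≤ 2 ^ n := by
        calc (2:ℝ) = 2 ^ 1 := (pow_one 2).symm
        _ ≤ 2 ^ n := pow_le_pow_right₀ (by norm_num) h
      nlinarith
  have hnonneg : ∀ n, 0 ≤ u n := by
    intro n
    apply le_ciInf
    intro γ
    exact div_nonneg (Nat.cast_nonneg _) (hD n)
  have hcob : IsCoboundedUnder (· ≤ ·) atTop u :=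
    IsBoundedUnder.isCoboundedUnder_le (isBoundedUnder_of ⟨0, fun n => hnonneg n⟩)
  refine limsup_le_of_le hcob ?_
  filter_upwards [eventually_ge_atTop 2] with n hn
  obtain ⟨γ, hγ⟩ := schur_count_bound n hn
  have hbdd : BddBelow (Set.range fun γ : (Fin n → ZMod 2) → Fin 3 =>
      (Nat.card {p : (Fin n → ZMod 2) × (Fin n → ZMod 2) //
          p.1 ≠ 0 ∧ p.2 ≠ 0 ∧ p.1 ≠ p.2 ∧
            γ p.1 = γ p.2 ∧ γ p.2 = γ (p.1 + p.2)} : ℝ)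
        / (((2 : ℝ) ^ n - 1) * ((2 : ℝ) ^ n - 2))) :=
    (Set.finite_range _).bddBelow
  refine le_trans (ciInf_le hbdd γ) ?_
  -- now bound the value for this γ
  have ht1 : (1 : ℝ) ≤ (2:ℝ) ^ (n - 2) := one_le_pow₀ (by norm_num)
  have hcast : (Nat.card {p : (Fin n → ZMod 2) × (Fin n → ZMod 2) //
          p.1 ≠ 0 ∧ p.2 ≠ 0 ∧ p.1 ≠ p.2 ∧
            γ p.1 = γ p.2 ∧ γ p.2 = γ (p.1 + p.2)} : ℝ) ≤ ((2:ℝ) ^ (n-2) - 1) ^ 2 := by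
    calc (Nat.card _ : ℝ) ≤ (((2 ^ (n - 2) - 1) ^ 2 : ℕ) : ℝ) := by exact_mod_cast hγ
    _ = ((2:ℝ) ^ (n-2) - 1) ^ 2 := by
        have h2 : (1:ℕ) ≤ 2 ^ (n-2) := Nat.one_le_two_pow
        push_cast [Nat.cast_sub h2]
        ring
  have hpow : (2:ℝ) ^ n = 4 * (2:ℝ) ^ (n - 2) := by
    calc (2:ℝ) ^ n = (2:ℝ) ^ ((n - 2) + 2) := by rw [Nat.sub_add_cancel hn]
    _ = 4 * (2:ℝ) ^ (n - 2) := by rw [pow_add]; ring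
  have hDpos : 0 < ((2 : ℝ) ^ n - 1) * ((2 : ℝ) ^ n - 2) := by nlinarith
  rw [div_le_iff₀ hDpos, hpow]
  have hC : (0:ℝ) ≤ (Nat.card {p : (Fin n → ZMod 2) × (Fin n → ZMod 2) //
          p.1 ≠ 0 ∧ p.2 ≠ 0 ∧ p.1 ≠ p.2 ∧
            γ p.1 = γ p.2 ∧ γ p.2 = γ (p.1 + p.2)} : ℝ) := Nat.cast_nonneg _
  nlinarith [hcast, ht1, hC]
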